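/- For every positive integer n and every positive integer k ≤ n, (n choose 1,k)_q = [k]_q · q^{n-k} · [n choose k]_q, where (n choose p,k)_q = ([n]_q/[k]_q) · Σ_{r≥0} [p choose r]_q [n-p choose r]_q [n-r-1 choose k-r-1]_q q^{(n-p)p + r(r-k)}. -/

import Mathlib

open Finset

/-- The variable `q`, as a rational function over `ℚ`. -/
noncomputable def q : RatFunc ℚ := RatFunc.X

/-- The q-integer `[m]_q = (1 - q^m)/(1 - q)`. -/
noncomputable def qint (m : ℕ) : RatFunc ℚ := (1 - q ^ m) / (1 - q)

/-- The q-integer for an integer exponent, `[x; q] = (q^x - 1)/(q - 1)`. -/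
noncomputable def qintZ (x : ℤ) : RatFunc ℚ := (q ^ x - 1) / (q - 1)

/-- The q-factorial `[m]!_q`. -/
noncomputable def qfac (m : ℕ) : RatFunc ℚ := ∏ i ∈ Finset.range m, qint (i + 1)

/-- The Gaussian q-binomial coefficient `[a choose b]_q`, zero when `b < 0` or `b > a`. -/
noncomputable def qbin (a b : ℤ) : RatFunc ℚ :=
  if 0 ≤ b ∧ b ≤ a then qfac a.toNat / (qfac b.toNat * qfac (a - b).toNat) else 0

/-- The first generalized q-binomial coefficient `(n choose p, k)_q`:
`([n]_q/[k]_q) · Σ_{r≥0} [p choose r]_q [n-p choose r]_q [n-r-1 choose k-r-1]_q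
  q^{(n-p)p + r(r-k)}`. -/
noncomputable def gchoose (n p k : ℕ) : RatFunc ℚ :=
  (qint n / qint k) *
    ∑ r ∈ Finset.range (n + 1),
      qbin p r * qbin ((n : ℤ) - p) r * qbin ((n : ℤ) - r - 1) ((k : ℤ) - r - 1) *
        q ^ (((n : ℤ) - p) * p + (r : ℤ) * ((r : ℤ) - k))

lemma one_sub_q_pow_ne_zero {m : ℕ} (hm : 0 < m) : (1 : RatFunc ℚ) - q ^ m ≠ 0 := by
  have : q ^ m = algebraMap (Polynomial ℚ) (RatFunc ℚ) (Polynomial.X ^ m) := by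
    simp [q, RatFunc.algebraMap_X]
  rw [this, sub_ne_zero]
  intro h
  have h2 : (Polynomial.X ^ m : Polynomial ℚ) = 1 := by
    apply RatFunc.algebraMap_injective
    simpa using h.symm
  have := congrArg (Polynomial.eval 0) h2
  simp [zero_pow hm.ne'] at this

lemma one_sub_q_ne_zero : (1 : RatFunc ℚ) - q ≠ 0 := by
  simpa using one_sub_q_pow_ne_zero (m := 1) one_pos

lemma qint_ne_zero {m : ℕ} (hm : 0 < m) : qint m ≠ 0 :=
  div_ne_zero (one_sub_q_pow_ne_zero hm) one_sub_q_ne_zero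

lemma qfac_ne_zero (m : ℕ) : qfac m ≠ 0 := by
  apply Finset.prod_ne_zero_iff.mpr
  intro i _; exact qint_ne_zero (Nat.succ_pos i)

lemma qfac_succ (m : ℕ) : qfac (m + 1) = qfac m * qint (m + 1) :=
  Finset.prod_range_succ _ _

lemma qfac_zero : qfac 0 = 1 := rfl

lemma qfac_one : qfac 1 = 1 := by
  rw [show (1:ℕ) = 0 + 1 from rfl, qfac_succ, qfac_zero, one_mul, qint, pow_one,
    div_self one_sub_q_ne_zero]

lemma qbin_nat (a b : ℕ) (h : b ≤ a) :
    qbin a b = qfac a / (qfac b * qfac (a - b)) := by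
  rw [qbin, if_pos ⟨Int.ofNat_nonneg b, by exact_mod_cast h⟩]
  have h1 : ((a:ℤ)).toNat = a := by simp
  have h2 : ((b:ℤ)).toNat = b := by simp
  have h3 : ((a:ℤ) - b).toNat = a - b := by omega
  rw [h1, h2, h3]

lemma qbin_neg (a b : ℤ) (h : b < 0) : qbin a b = 0 := by
  rw [qbin, if_neg]; omega

lemma qbin_gt (a b : ℤ) (h : a < b) : qbin a b = 0 := by
  rw [qbin, if_neg]; omega

lemma qbin_zero (m : ℕ) : qbin (m:ℤ) 0 = 1 := by
  rw [qbin, if_pos ⟨le_refl 0, Int.ofNat_nonneg m⟩]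
  simp [qfac_zero, div_self (qfac_ne_zero m)]

set_option maxHeartbeats 2000000 in
theorem gchoose_p_eq_one (n k : ℕ) (hn : 0 < n) (hk : 0 < k) (hkn : k ≤ n) :
    gchoose n 1 k = qint k * q ^ ((n : ℤ) - k) * qbin n k := by
  rw [gchoose]
  have hsub : Finset.range 2 ⊆ Finset.range (n + 1) := by
    exact Finset.range_mono (by omega)
  rw [← Finset.sum_subset hsub (by
    intro r _ hr
    have hr2 : 2 ≤ r := by simp at hr; omega
    rw [qbin_gt _ _ (show ((1:ℕ):ℤ) < (r:ℤ) by exact_mod_cast hr2), zero_mul, zero_mul,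
      zero_mul])]
  rw [Finset.sum_range_succ, Finset.sum_range_one]
  push_cast
  rcases Nat.lt_or_ge k 2 with hk2 | hk2
  · -- k = 1
    interval_cases k
    obtain ⟨b, rfl⟩ : ∃ b, n = b + 1 := ⟨n - 1, by omega⟩
    have qint_one : qint 1 = 1 := by rw [qint, pow_one, div_self one_sub_q_ne_zero]
    have e1 : ((b+1:ℕ):ℤ) - 1 = ((b:ℕ):ℤ) := by push_cast; ring
    have e2 : ((b+1:ℕ):ℤ) - 0 - 1 = ((b:ℕ):ℤ) := by push_cast; ring
    have e3 : ((1:ℕ):ℤ) - 0 - 1 = ((0:ℕ):ℤ) := by norm_num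
    have e4 : ((1:ℕ):ℤ) - 1 - 1 = (-1 : ℤ) := by norm_num
    have e5 : ((b:ℕ):ℤ) * 1 + 0 * (0 - ((1:ℕ):ℤ)) = ((b:ℕ):ℤ) := by push_cast; ring
    have e6 : ((b+1:ℕ):ℤ) - ((1:ℕ):ℤ) = ((b:ℕ):ℤ) := by push_cast; ring
    rw [e1, e2, e3, e4, e5, e6, qbin_neg ((b:ℤ) - 1) (-1) (by norm_num), mul_zero, zero_mul,
      add_zero, qint_one, div_one, zpow_natCast]
    push_cast
    have v1 : qbin 1 0 = 1 := by
      rw [qbin, if_pos (by norm_num)]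
      norm_num [qfac_one, qfac_zero]
    have v2 : qbin (b:ℤ) 0 = 1 := by
      rw [qbin, if_pos ⟨le_refl 0, Int.ofNat_nonneg b⟩]
      simp [qfac_zero, div_self (qfac_ne_zero b)]
    have v4 : qbin ((b:ℤ)+1) 1 = qint (b+1) := by
      rw [show ((b:ℤ)+1) = ((b+1:ℕ):ℤ) by push_cast; ring,
        show (1:ℤ) = ((1:ℕ):ℤ) from rfl, qbin_nat _ _ (by omega), qfac_one,
        Nat.add_sub_cancel, qfac_succ, one_mul, mul_comm,
        mul_div_assoc, div_self (qfac_ne_zero b), mul_one]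
    rw [v1, v2, v4]
    ring
  · -- k ≥ 2
    obtain ⟨a, b, rfl, rfl⟩ : ∃ a b, k = a + 2 ∧ n = a + b + 2 :=
      ⟨k - 2, n - k, by omega, by omega⟩
    have e1 : ((a+b+2:ℕ):ℤ) - 1 = ((a+b+1:ℕ):ℤ) := by push_cast; ring
    have e2 : ((a+b+2:ℕ):ℤ) - 0 - 1 = ((a+b+1:ℕ):ℤ) := by push_cast; ring
    have e3 : ((a+2:ℕ):ℤ) - 0 - 1 = ((a+1:ℕ):ℤ) := by push_cast; ring
    have e4 : ((a+b+1:ℕ):ℤ) - 1 = ((a+b:ℕ):ℤ) := by push_cast; ring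
    have e5 : ((a+2:ℕ):ℤ) - 1 - 1 = ((a:ℕ):ℤ) := by push_cast; ring
    have e6 : ((a+b+1:ℕ):ℤ) * 1 + 0 * (0 - ((a+2:ℕ):ℤ)) = ((a+b+1:ℕ):ℤ) := by
      push_cast; ring
    have e7 : ((a+b+1:ℕ):ℤ) * 1 + 1 * (1 - ((a+2:ℕ):ℤ)) = ((b:ℕ):ℤ) := by push_cast; ring
    have e8 : ((a+b+2:ℕ):ℤ) - ((a+2:ℕ):ℤ) = ((b:ℕ):ℤ) := by push_cast; ring
    rw [e1, e2, e3, e4, e5, e6, e7, e8, zpow_natCast, zpow_natCast]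
    have v1 : qbin 1 0 = 1 := by
      rw [qbin, if_pos (by norm_num)]
      norm_num [qfac_one, qfac_zero]
    have v2 : qbin 1 1 = 1 := by
      rw [qbin, if_pos (by norm_num)]
      norm_num [qfac_one, qfac_zero]
    have hone : (1:ℤ) = ((1:ℕ):ℤ) := rfl
    rw [v1, v2, qbin_zero (a+b+1), hone, qbin_nat (a+b+1) (a+1) (by omega),
      qbin_nat (a+b+1) 1 (by omega), qbin_nat (a+b) a (by omega),
      qbin_nat (a+b+2) (a+2) (by omega)]
    have d1 : a+b+1 - (a+1) = b := by omega
    have d2 : a+b+1 - 1 = a+b := by omega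
    have d3 : a+b - a = b := by omega
    have d4 : a+b+2 - (a+2) = b := by omega
    rw [d1, d2, d3, d4, qfac_one]
    have f1 : qfac (a+b+1) = qfac (a+b) * qint (a+b+1) := qfac_succ (a+b)
    have f2 : qfac (a+b+2) = qfac (a+b) * qint (a+b+1) * qint (a+b+2) := by
      rw [show a+b+2 = (a+b+1)+1 by omega, qfac_succ, f1]
    have g1 : qfac (a+1) = qfac a * qint (a+1) := qfac_succ a
    have g2 : qfac (a+2) = qfac a * qint (a+1) * qint (a+2) := by
      rw [show a+2 = (a+1)+1 by omega, qfac_succ, g1]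
    have hrel : qint (a+2) = qint (a+1) + q ^ (a+1) := by
      rw [qint, qint]
      field_simp [one_sub_q_ne_zero]
      ring
    have hA := qfac_ne_zero a
    have hB := qfac_ne_zero b
    have hD := qfac_ne_zero (a+b)
    have j1 : qint (a+1) ≠ 0 := qint_ne_zero (by omega)
    have j3 : qint (a+b+1) ≠ 0 := qint_ne_zero (by omega)
    have j4 : qint (a+b+2) ≠ 0 := qint_ne_zero (by omega)
    have j2 : qint (a+1) + q ^ (a+1) ≠ 0 := by
      rw [← hrel]; exact qint_ne_zero (by omega)
    rw [f1, f2, g1, g2, hrel]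
    field_simp [hA, hB, hD, j1, j2, j3, j4]
    ring
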